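/- Let M(t) = J_polar⁻¹(√δ, θ₀ + ωt)·exp(t·J_Γ)·J_polar(√δ, θ₀), where J_polar(r,θ) is the Jacobian of the Cartesian-to-polar change of variables, J_Γ = [[−2δ, 0], [−2β√δ, 0]], and ω = γ − βδ. Then M(t) admits the Floquet representation M(t) = Z(t)·e^{tR} with Z(t) = L(ωt) the rotation matrix by angle ωt (so Z is T-periodic with T = 2π/ω) and R = J_polar⁻¹(√δ, θ₀)·J_Γ·J_polar(√δ, θ₀) constant; moreover M(0) = I and the eigenvalues of R are −2δ and 0. -/

import Mathlib

open Polynomial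

/-- Jacobian of the Cartesian-to-polar change of variables. -/
noncomputable def Jpolar (r θ : ℝ) : Matrix (Fin 2) (Fin 2) ℝ :=
  !![Real.cos θ, Real.sin θ; -Real.sin θ / r, Real.cos θ / r]

/-- Inverse of the Cartesian-to-polar Jacobian. -/
noncomputable def JpolarInv (r θ : ℝ) : Matrix (Fin 2) (Fin 2) ℝ :=
  !![Real.cos θ, -r * Real.sin θ; Real.sin θ, r * Real.cos θ]

/-- Rotation matrix by angle `θ`. -/
noncomputable def rotMat (θ : ℝ) : Matrix (Fin 2) (Fin 2) ℝ :=
  !![Real.cos θ, -Real.sin θ; Real.sin θ, Real.cos θ]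

/-- Linearization of the Hopf normal form in polar coordinates about the limit cycle. -/
noncomputable def JGamma (δ β : ℝ) : Matrix (Fin 2) (Fin 2) ℝ :=
  !![-2 * δ, 0; -2 * β * Real.sqrt δ, 0]

lemma JpolarInv_mul_Jpolar (r θ : ℝ) (hr : r ≠ 0) :
    JpolarInv r θ * Jpolar r θ = 1 := by
  unfold JpolarInv Jpolar
  ext i j
  fin_cases i <;> fin_cases j
  all_goals try simp [Matrix.mul_apply, Fin.sum_univ_two, Matrix.one_apply]
  all_goals try field_simp
  all_goals first | ring1 | linear_combination r * Real.sin_sq_add_cos_sq θ | linear_combination (1 - r) * Real.sin_sq_add_cos_sq θ | linear_combination (r - 1) * Real.sin_sq_add_cos_sq θ | linear_combination Real.sin_sq_add_cos_sq θ | linear_combination (-r) * Real.sin_sq_add_cos_sq θ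

lemma Jpolar_mul_JpolarInv (r θ : ℝ) (hr : r ≠ 0) :
    Jpolar r θ * JpolarInv r θ = 1 := by
  unfold JpolarInv Jpolar
  ext i j
  fin_cases i <;> fin_cases j
  all_goals try simp [Matrix.mul_apply, Fin.sum_univ_two, Matrix.one_apply]
  all_goals try field_simp
  all_goals first | ring1 | linear_combination r * Real.sin_sq_add_cos_sq θ | linear_combination (1 - r) * Real.sin_sq_add_cos_sq θ | linear_combination (r - 1) * Real.sin_sq_add_cos_sq θ | linear_combination Real.sin_sq_add_cos_sq θ | linear_combination (-r) * Real.sin_sq_add_cos_sq θ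

lemma JpolarInv_shift (r θ φ : ℝ) :
    JpolarInv r (θ + φ) = rotMat φ * JpolarInv r θ := by
  unfold JpolarInv rotMat
  ext i j
  fin_cases i <;> fin_cases j <;>
    simp [Matrix.mul_apply, Fin.sum_univ_two, Real.cos_add, Real.sin_add] <;> ring

lemma charpoly_fin_two' (M : Matrix (Fin 2) (Fin 2) ℝ) :
    M.charpoly = X ^ 2 - C M.trace * X + C M.det := by
  rw [Matrix.charpoly, Matrix.det_fin_two, Matrix.trace_fin_two, Matrix.det_fin_two]
  rw [Matrix.charmatrix_apply_eq, Matrix.charmatrix_apply_eq,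
    Matrix.charmatrix_apply_ne _ _ _ (by decide), Matrix.charmatrix_apply_ne _ _ _ (by decide)]
  simp only [map_add, map_mul, map_sub]
  ring

/-- Floquet representation of the fundamental matrix of the Hopf normal form about its
limit cycle: `M(t) = Z(t) e^{tR}` with `Z(t) = L(ωt)` (`T`-periodic, `T = 2π/ω`) and
`R = J_polar⁻¹ J_Γ J_polar` constant; moreover `M(0) = I` and the eigenvalues of `R`
are `−2δ` and `0` (its characteristic polynomial is `X² + 2δX`). -/
theorem hopf_floquet_representation
    (δ β γ θ₀ : ℝ) (hδ : 0 < δ) (hω : γ - β * δ ≠ 0) :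
    let ω := γ - β * δ
    let M : ℝ → Matrix (Fin 2) (Fin 2) ℝ := fun t =>
      JpolarInv (Real.sqrt δ) (θ₀ + ω * t) * NormedSpace.exp (t • JGamma δ β)
        * Jpolar (Real.sqrt δ) θ₀
    let R : Matrix (Fin 2) (Fin 2) ℝ :=
      JpolarInv (Real.sqrt δ) θ₀ * JGamma δ β * Jpolar (Real.sqrt δ) θ₀
    (∀ t : ℝ, M t = rotMat (ω * t) * NormedSpace.exp (t • R)) ∧
    (∀ t : ℝ, rotMat (ω * (t + 2 * Real.pi / ω)) = rotMat (ω * t)) ∧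
    M 0 = 1 ∧
    R.charpoly = X ^ 2 + C (2 * δ) * X := by
  intro ω M R
  have hr : Real.sqrt δ ≠ 0 := ne_of_gt (Real.sqrt_pos.mpr hδ)
  have h1 := JpolarInv_mul_Jpolar (Real.sqrt δ) θ₀ hr
  have h2 := Jpolar_mul_JpolarInv (Real.sqrt δ) θ₀ hr
  set U : (Matrix (Fin 2) (Fin 2) ℝ)ˣ :=
    ⟨JpolarInv (Real.sqrt δ) θ₀, Jpolar (Real.sqrt δ) θ₀, h1, h2⟩ with hU
  have hR : R = U.val * JGamma δ β * (U⁻¹).val := rfl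
  refine ⟨fun t => ?_, fun t => ?_, ?_, ?_⟩
  · have h3 : t • R = U.val * (t • JGamma δ β) * (U⁻¹).val := by
      rw [hR]; simp [Matrix.mul_smul, Matrix.smul_mul]
    have hexp : NormedSpace.exp (t • R) =
        U.val * NormedSpace.exp (t • JGamma δ β) * (U⁻¹).val := by
      rw [h3]
      exact Matrix.exp_units_conj U (t • JGamma δ β)
    show JpolarInv (Real.sqrt δ) (θ₀ + ω * t) * NormedSpace.exp (t • JGamma δ β)
        * Jpolar (Real.sqrt δ) θ₀ = _
    rw [hexp, JpolarInv_shift]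
    show rotMat (ω * t) * U.val * NormedSpace.exp (t • JGamma δ β) * (U⁻¹).val = _
    rw [Matrix.mul_assoc, Matrix.mul_assoc, Matrix.mul_assoc]
  · have h4 : ω * (t + 2 * Real.pi / ω) = ω * t + 2 * Real.pi := by
      have hω' : ω ≠ 0 := hω
      field_simp
    rw [h4]
    unfold rotMat
    rw [Real.cos_add_two_pi, Real.sin_add_two_pi]
  · show JpolarInv (Real.sqrt δ) (θ₀ + ω * 0) * NormedSpace.exp ((0:ℝ) • JGamma δ β)
        * Jpolar (Real.sqrt δ) θ₀ = 1
    rw [mul_zero, add_zero, zero_smul, NormedSpace.exp_zero, mul_one, h1]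
  · have htr : R.trace = -2 * δ := by
      have h5 : (U⁻¹).val * U.val = 1 := h2
      rw [hR, Matrix.trace_mul_cycle, h5, Matrix.one_mul, Matrix.trace_fin_two]
      simp [JGamma]
    have hdet : R.det = 0 := by
      rw [hR, Matrix.det_mul, Matrix.det_mul]
      have h6 : (JGamma δ β).det = 0 := by simp [JGamma, Matrix.det_fin_two]
      rw [h6]; ring
    rw [charpoly_fin_two', htr, hdet]
    simp
    try ring
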